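/- In the abstract critical-map setup, let λ be a complex number with |λ| < 2/δ, let x be a vertex, and let O = v₀, v₁, …, v_n = x be a walk in G (each consecutive pair adjacent). Then Σ_{k=0}^∞ λ^k · P k x / k! = Π_{j=0}^{n−1} (1 + λ·(Z v_{j+1} − Z v_j)/2) / (1 − λ·(Z v_{j+1} − Z v_j)/2), all the denominators being nonzero; in particular the value of the product on the right-hand side is independent of the chosen walk from O to x, and equals the discrete exponential exp(:λ: x). -/

import Mathlib

open Finset

lemma conv_step (A B : ℕ → ℂ) (w : ℂ) (hw : ‖w‖ < 1)
    (hA : Summable fun k => ‖A k‖)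
    (hB0 : B 0 = A 0) (hrec : ∀ k : ℕ, B (k + 1) = A (k + 1) + w * (A k + B k)) :
    Summable (fun k => ‖B k‖) ∧ (∑' k, B k) = (∑' k, A k) * ((1 + w) / (1 - w)) := by
  set c : ℕ → ℂ := fun m => if m = 0 then 1 else 2 * w ^ m with hc_def
  have hden : (1 : ℂ) - w ≠ 0 := by
    intro h
    have : w = 1 := by linear_combination -h
    rw [this] at hw; simp at hw
  have hcnorm : Summable fun m => ‖c m‖ := by
    apply Summable.of_nonneg_of_le (fun m => norm_nonneg _) (f := fun m => 2 * ‖w‖ ^ m)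
    · intro m
      by_cases h : m = 0
      · simp [hc_def, h]
      · simp [hc_def, h, norm_pow]
    · exact (summable_geometric_of_lt_one (norm_nonneg w) hw).mul_left 2
  have hconv : ∀ k, B k = ∑ j ∈ range (k + 1), A j * c (k - j) := by
    intro k
    induction k with
    | zero => simp [hB0, hc_def]
    | succ k ih =>
      rw [hrec k, ih, sum_range_succ (fun j => A j * c (k + 1 - j))]
      have h1 : ∑ j ∈ range (k + 1), A j * c (k + 1 - j)
          = w * A k + ∑ j ∈ range (k + 1), A j * (w * c (k - j)) := by
        rw [sum_range_succ (fun j => A j * c (k + 1 - j)),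
            sum_range_succ (fun j => A j * (w * c (k - j)))]
        have h2 : ∑ j ∈ range k, A j * c (k + 1 - j)
            = ∑ j ∈ range k, A j * (w * c (k - j)) := by
          apply sum_congr rfl
          intro j hj
          have hj' : j < k := mem_range.mp hj
          have e1 : k + 1 - j = (k - j) + 1 := by omega
          have e2 : k - j ≠ 0 := by omega
          simp only [hc_def, e1, if_neg (Nat.succ_ne_zero _), if_neg e2]
          ring
        rw [h2]
        simp only [hc_def, Nat.sub_self, if_pos rfl, Nat.succ_sub (le_refl k),
          Nat.sub_self, if_neg (Nat.succ_ne_zero 0)]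
        ring
      rw [h1]
      have h3 : w * ∑ j ∈ range (k + 1), A j * c (k - j)
          = ∑ j ∈ range (k + 1), A j * (w * c (k - j)) := by
        rw [Finset.mul_sum]; exact sum_congr rfl fun j _ => by ring
      rw [mul_add, h3]
      simp only [hc_def, Nat.sub_self, if_pos rfl]
      ring
  have htc : (∑' m, c m) = (1 + w) / (1 - w) := by
    rw [Summable.tsum_eq_zero_add hcnorm.of_norm]
    have : ∀ m : ℕ, c (m + 1) = (2 * w) * w ^ m := by
      intro m; simp [hc_def, pow_succ]; ring
    simp_rw [this]
    rw [tsum_mul_left, tsum_geometric_of_norm_lt_one hw]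
    simp only [hc_def, if_pos rfl]
    field_simp
    ring
  have hBfun : B = fun n => ∑ j ∈ range (n + 1), A j * c (n - j) := funext hconv
  constructor
  · rw [hBfun]
    exact summable_norm_sum_mul_range_of_summable_norm hA hcnorm
  · have h := hasSum_sum_range_mul_of_summable_norm hA hcnorm (f := A) (g := c)
    rw [htc] at h
    rw [hBfun]
    exact h.tsum_eq

open Complex

lemma walk_aux {V : Type*} (G : SimpleGraph V)
    (O : V) (δ : ℝ) (hδ : 0 < δ)
    (Z : V → ℂ)
    (hZ : ∀ x y : V, G.Adj x y → ‖Z y - Z x‖ = δ)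
    (P : ℕ → V → ℂ)
    (hP0 : ∀ v : V, P 0 v = 1)
    (hPO : ∀ k : ℕ, 1 ≤ k → P k O = 0)
    (hPrec : ∀ k : ℕ, 1 ≤ k → ∀ x y : V, G.Adj x y →
      P k y = P k x + (k : ℂ) * (P (k - 1) x + P (k - 1) y) * (Z y - Z x) / 2)
    (lam : ℂ) (hlam : ‖lam‖ < 2 / δ) :
    ∀ (n : ℕ) (v : Fin (n + 1) → V), v 0 = O →
      (∀ j : Fin n, G.Adj (v j.castSucc) (v j.succ)) →
      Summable (fun k : ℕ => ‖lam ^ k * P k (v (Fin.last n)) / (Nat.factorial k : ℂ)‖) ∧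
      (∑' k : ℕ, lam ^ k * P k (v (Fin.last n)) / (Nat.factorial k : ℂ)) =
        ∏ j : Fin n,
          (1 + lam * (Z (v j.succ) - Z (v j.castSucc)) / 2) /
          (1 - lam * (Z (v j.succ) - Z (v j.castSucc)) / 2) := by
  intro n
  induction n with
  | zero =>
    intro v hv0 _
    have hlast : v (Fin.last 0) = O := by
      rw [show Fin.last 0 = 0 from rfl, hv0]
    have hfun : ∀ k : ℕ, lam ^ k * P k (v (Fin.last 0)) / (Nat.factorial k : ℂ)
        = if k = 0 then 1 else 0 := by
      intro k
      cases k with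
      | zero => simp [hlast, hP0]
      | succ m => simp [hlast, hv0, hPO (m + 1) (by omega)]
    constructor
    · apply summable_of_ne_finset_zero (s := {0})
      intro k hk
      simp only [Finset.mem_singleton] at hk
      rw [hfun k, if_neg hk]
      simp
    · simp only [Finset.univ_eq_empty, Finset.prod_empty]
      rw [tsum_eq_single 0]
      · rw [hfun 0]; simp
      · intro k hk; rw [hfun k, if_neg hk]
  | succ n ih =>
    intro v hv0 hadj
    have hprev := ih (fun i => v i.castSucc) (by simpa using hv0)
      (fun j => by exact hadj j.castSucc)
    set x' := v (Fin.last n).castSucc with hx'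
    set y' := v (Fin.last (n + 1)) with hy'
    have hy'' : y' = v (Fin.last n).succ := by rw [hy', Fin.succ_last]
    have hadj' : G.Adj x' y' := by rw [hy'']; exact hadj (Fin.last n)
    set w : ℂ := lam * (Z y' - Z x') / 2 with hw_def
    have hZd : ‖Z y' - Z x'‖ = δ := hZ _ _ hadj'
    have hw : ‖w‖ < 1 := by
      have : ‖w‖ = ‖lam‖ * δ / 2 := by
        rw [hw_def]
        rw [norm_div, norm_mul]
        simp [hZd]
      rw [this]
      have h2 : ‖lam‖ * δ < 2 := (lt_div_iff₀ hδ).mp hlam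
      linarith
    set A : ℕ → ℂ := fun k => lam ^ k * P k x' / (Nat.factorial k : ℂ) with hA_def
    set B : ℕ → ℂ := fun k => lam ^ k * P k y' / (Nat.factorial k : ℂ) with hB_def
    have hB0 : B 0 = A 0 := by simp [hA_def, hB_def, hP0]
    have hrec : ∀ k : ℕ, B (k + 1) = A (k + 1) + w * (A k + B k) := by
      intro k
      have h := hPrec (k + 1) (by omega) x' y' hadj'
      simp only [Nat.add_sub_cancel] at h
      simp only [hA_def, hB_def, hw_def, h]
      have hfac : ((k + 1).factorial : ℂ) = (k + 1 : ℂ) * (k.factorial : ℂ) := by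
        push_cast [Nat.factorial_succ]; ring
      have hfne : (k.factorial : ℂ) ≠ 0 := by
        exact_mod_cast Nat.cast_ne_zero.mpr (Nat.factorial_ne_zero k)
      have hkne : (k + 1 : ℂ) ≠ 0 := Nat.cast_add_one_ne_zero k
      rw [hfac]
      field_simp
      all_goals (push_cast; ring)
    have hstep := conv_step A B w hw hprev.1 hB0 hrec
    have hprod : ∏ j : Fin (n + 1),
        (1 + lam * (Z (v j.succ) - Z (v j.castSucc)) / 2) /
        (1 - lam * (Z (v j.succ) - Z (v j.castSucc)) / 2)
        = (∏ j : Fin n,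
          (1 + lam * (Z ((fun i => v i.castSucc) j.succ) - Z ((fun i => v i.castSucc) j.castSucc)) / 2) /
          (1 - lam * (Z ((fun i => v i.castSucc) j.succ) - Z ((fun i => v i.castSucc) j.castSucc)) / 2))
          * ((1 + w) / (1 - w)) := by
      rw [Fin.prod_univ_castSucc]
      congr 1
    refine ⟨hstep.1, ?_⟩
    rw [hstep.2, hprod, hprev.2]

theorem discrete_exponential_series_eq_rational_product
    {V : Type*} (G : SimpleGraph V) (hG : G.Connected)
    (O : V) (δ : ℝ) (hδ : 0 < δ)
    (Z : V → ℂ) (hZO : Z O = 0)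
    (hZ : ∀ x y : V, G.Adj x y → ‖Z y - Z x‖ = δ)
    (P : ℕ → V → ℂ)
    (hP0 : ∀ v : V, P 0 v = 1)
    (hPO : ∀ k : ℕ, 1 ≤ k → P k O = 0)
    (hPrec : ∀ k : ℕ, 1 ≤ k → ∀ x y : V, G.Adj x y →
      P k y = P k x + (k : ℂ) * (P (k - 1) x + P (k - 1) y) * (Z y - Z x) / 2)
    (lam : ℂ) (hlam : ‖lam‖ < 2 / δ)
    (x : V) (n : ℕ) (v : Fin (n + 1) → V)
    (hv0 : v 0 = O) (hvn : v (Fin.last n) = x)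
    (hadj : ∀ j : Fin n, G.Adj (v j.castSucc) (v j.succ)) :
    (∀ j : Fin n, 1 - lam * (Z (v j.succ) - Z (v j.castSucc)) / 2 ≠ 0) ∧
    (∑' k : ℕ, lam ^ k * P k x / (Nat.factorial k : ℂ)) =
      ∏ j : Fin n,
        (1 + lam * (Z (v j.succ) - Z (v j.castSucc)) / 2) /
        (1 - lam * (Z (v j.succ) - Z (v j.castSucc)) / 2) := by
  have hnorm : ∀ j : Fin n, ‖lam * (Z (v j.succ) - Z (v j.castSucc)) / 2‖ < 1 := by
    intro j
    have hZd : ‖Z (v j.succ) - Z (v j.castSucc)‖ = δ := hZ _ _ (hadj j)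
    have heq : ‖lam * (Z (v j.succ) - Z (v j.castSucc)) / 2‖
        = ‖lam‖ * δ / 2 := by
      rw [norm_div, norm_mul]
      simp [hZd]
    rw [heq]
    have h2 : ‖lam‖ * δ < 2 := (lt_div_iff₀ hδ).mp hlam
    linarith
  constructor
  · intro j h
    have hw1 : lam * (Z (v j.succ) - Z (v j.castSucc)) / 2 = 1 := by
      linear_combination -h
    have := hnorm j
    rw [hw1] at this
    simp at this
  · have := (walk_aux G O δ hδ Z hZ P hP0 hPO hPrec lam hlam n v hv0 hadj).2
    rwa [hvn] at this
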